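/- Let E be a field and σ : E → E a ring automorphism with σ∘σ = id and σ ≠ id; let F = {x ∈ E : σ(x) = x} be its fixed field. Let n ≥ 1. Define an action of the group (E^×)ⁿ × F^×, with coordinates (a_1,…,a_n,a_0), on the set (E^×)^{n−1} × F^×, with coordinates (k_1,…,k_{n−1},k_n), by (a·k)_i = a_i a_{i+1}^{-1} k_i for 1 ≤ i ≤ n−1 and (a·k)_n = a_0^{-1} a_n σ(a_n) k_n. Then this action is transitive: every tuple can be moved to (1, …, 1). -/

import Mathlib

/-- The torus action on Whittaker data for the quasi-split unitary similitude group
`GU_{2n}(F)` (`E/F` quadratic with involution `σ`): coefficients satisfy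
`k_0, …, k_{n-2} ∈ E^×` and `k_{n-1} ∈ F^×` (σ-fixed); the torus has coordinates
`a_0, …, a_{n-1} ∈ E^×` and a similitude coordinate `a0 ∈ F^×`, acting by
`(a·k)_i = a_i a_{i+1}⁻¹ k_i` for `i < n-1` and
`(a·k)_{n-1} = a0⁻¹ a_{n-1} σ(a_{n-1}) k_{n-1}`. This action is transitive. -/
theorem stmt_14 (E : Type*) [Field E] (σ : E →+* E)
    (hσ2 : ∀ x, σ (σ x) = x) (hσ1 : σ ≠ RingHom.id E)
    (n : ℕ) (hn : 0 < n)
    (k : Fin n → E) (hk0 : ∀ i, k i ≠ 0)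
    (hkF : σ (k ⟨n - 1, by omega⟩) = k ⟨n - 1, by omega⟩) :
    ∃ (a : Fin n → E) (a0 : E), (∀ i, a i ≠ 0) ∧ a0 ≠ 0 ∧ σ a0 = a0 ∧
      ∀ i : Fin n,
        (if h : (i : ℕ) + 1 < n then a i * (a ⟨(i : ℕ) + 1, h⟩)⁻¹ * k i
         else a0⁻¹ * a i * σ (a i) * k i) = 1 := by
  set g : ℕ → E := fun j => if h : j < n then k ⟨j, h⟩ else 1 with hg
  have hg0 : ∀ j, g j ≠ 0 := by
    intro j
    simp only [hg]
    split
    · exact hk0 _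
    · exact one_ne_zero
  refine ⟨fun i => (∏ j ∈ Finset.Ico (i : ℕ) (n - 1), g j)⁻¹,
    k ⟨n - 1, by omega⟩, ?_, hk0 _, hkF, ?_⟩
  · intro i
    exact inv_ne_zero (Finset.prod_ne_zero_iff.2 fun j _ => hg0 j)
  · intro i
    by_cases h : (i : ℕ) + 1 < n
    · rw [dif_pos h]
      have hsplit : Finset.Ico (i : ℕ) (n - 1) = insert (i : ℕ) (Finset.Ico ((i : ℕ) + 1) (n - 1)) := by
        ext x
        simp only [Finset.mem_Ico, Finset.mem_insert]
        omega
      have hP : (∏ j ∈ Finset.Ico ((i : ℕ) + 1) (n - 1), g j) ≠ 0 :=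
        Finset.prod_ne_zero_iff.2 fun j _ => hg0 j
      have hgi : g (i : ℕ) = k i := by
        simp only [hg]
        rw [dif_pos i.isLt]
      beta_reduce
      rw [hsplit, Finset.prod_insert (by simp), inv_inv, hgi]
      field_simp
      rw [div_self (hk0 i)]
    · have hi : (i : ℕ) = n - 1 := by omega
      rw [dif_neg h]
      have hIco : Finset.Ico (i : ℕ) (n - 1) = ∅ := by
        rw [Finset.Ico_eq_empty_iff]; omega
      have hki : k i = k ⟨n - 1, by omega⟩ := by
        congr 1
        exact Fin.ext hi
      beta_reduce
      rw [hIco, Finset.prod_empty, inv_one, map_one, hki]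
      field_simp
      exact div_self (hk0 _)
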